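/- arXiv:2004.00669 — 4 statements merged into one kernel-verified Lean document; each statement's English description precedes it below -/
import Mathlib

section
/- Fix θ ∈ (0, 1/4). The function W(a,b,q) = θ(1−q) − b² + b − 1/3 − (a² − b² − θ(2q−1))²/(4(a−b)), defined for 0 ≤ a < b ≤ 1 and q ∈ [0,1], satisfies W(a,b,q) ≤ (48θ² + 24θ − 1)/48, with equality at (a,b,q) = (1/4+θ, 3/4+θ, 1) and at (1/4−θ, 3/4−θ, 0). -/
/-- Key polynomial nonnegativity: Q(v,w,x) ≥ 0 for v ≥ -1/2, x ∈ [0,1]. -/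
lemma Q_nonneg (v w x : ℝ) (hv : -1/2 ≤ v) (hx0 : 0 ≤ x) (hx1 : x ≤ 1) :
    0 ≤ w^2/2 + 2*v*w*x + v*w^2 + v^2*x + v^2*x^2 + v^2*w + 2*v^2*w*x + v^2*w^2
      + 2*v^3*x + 2*v^3*w + v^4 := by
  have hA : 0 < 1/2 + v + v^2 := by nlinarith [sq_nonneg (v + 1/2)]
  have hE : 0 ≤ 2*x*(1-x)*(1+2*v) + v^2 := by
    have h1 : 0 ≤ x*(1-x) := mul_nonneg hx0 (by linarith)
    nlinarith
  have key : 4*(1/2 + v + v^2) *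
      (w^2/2 + 2*v*w*x + v*w^2 + v^2*x + v^2*x^2 + v^2*w + 2*v^2*w*x + v^2*w^2
        + 2*v^3*x + 2*v^3*w + v^4)
      = (2*(1/2 + v + v^2)*w + v*(2*x*(1+v) + v*(1+2*v)))^2
        + v^2*(2*x*(1-x)*(1+2*v) + v^2) := by ring
  nlinarith [sq_nonneg (2*(1/2 + v + v^2)*w + v*(2*x*(1+v) + v*(1+2*v))),
    mul_nonneg (sq_nonneg v) hE, hA, key]

/-- For θ ∈ (0,1/4), W(a,b,q) ≤ (48θ²+24θ−1)/48 on the feasible set (with the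
indifferent individual in [0,1]), with equality at (1/4+θ, 3/4+θ, 1) and
(1/4−θ, 3/4−θ, 0). -/
theorem asymmetric_optima (θ : ℝ) (hθ : θ ∈ Set.Ioo (0:ℝ) (1/4)) :
    (∀ a b q : ℝ, 0 ≤ a → a < b → b ≤ 1 → q ∈ Set.Icc (0:ℝ) 1 →
      (a^2 - b^2 - θ*(2*q-1)) / (2*(a-b)) ∈ Set.Icc (0:ℝ) 1 →
      θ*(1-q) - b^2 + b - 1/3 - (a^2 - b^2 - θ*(2*q-1))^2 / (4*(a-b)) ≤
        (48*θ^2 + 24*θ - 1)/48) ∧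
    θ*(1-1) - (3/4+θ)^2 + (3/4+θ) - 1/3 -
        ((1/4+θ)^2 - (3/4+θ)^2 - θ*(2*1-1))^2 / (4*((1/4+θ)-(3/4+θ))) =
      (48*θ^2 + 24*θ - 1)/48 ∧
    θ*(1-0) - (3/4-θ)^2 + (3/4-θ) - 1/3 -
        ((1/4-θ)^2 - (3/4-θ)^2 - θ*(2*0-1))^2 / (4*((1/4-θ)-(3/4-θ))) =
      (48*θ^2 + 24*θ - 1)/48 := by
  obtain ⟨ht0, ht1⟩ := hθ
  refine ⟨?_, ?_, ?_⟩
  · intro a b q ha hab hb1 hq hx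
    obtain ⟨hq0, hq1⟩ := hq
    obtain ⟨hx0, hx1⟩ := hx
    set x : ℝ := (a^2 - b^2 - θ*(2*q-1)) / (2*(a-b)) with hxdef
    have hc : 2*(a-b) ≠ 0 := by intro h; nlinarith
    have hN : a^2 - b^2 - θ*(2*q-1) = 2*(a-b)*x := by
      rw [hxdef, mul_div_assoc', eq_div_iff hc]; ring
    have hfrac : (a^2 - b^2 - θ*(2*q-1))^2 / (4*(a-b)) = (a-b)*x^2 := by
      rw [hN]
      have h4 : (4:ℝ)*(a-b) ≠ 0 := by intro h; nlinarith
      field_simp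
      ring
    rw [hfrac]
    have hrel : θ*(2*q-1) = (b-a)*(2*x - 2*b + (b-a)) := by nlinarith [hN]
    have hθq : (θ*(2*q-1))^2 ≤ θ^2 := by
      nlinarith [mul_nonneg hq0 (by linarith : (0:ℝ) ≤ 1-q), sq_nonneg θ]
    have h1 : (θ*(2*q-1))^2 = ((b-a)*(2*x - 2*b + (b-a)))^2 := by rw [hrel]
    have hQ := Q_nonneg ((b-a) - 1/2) (x - 2*b + 1) x (by linarith) hx0 hx1
    nlinarith [hQ, hθq, h1, hrel]
  · rw [show (4:ℝ)*((1/4+θ)-(3/4+θ)) = -2 by ring]; ring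
  · rw [show (4:ℝ)*((1/4-θ)-(3/4-θ)) = -2 by ring]; ring
end

section
/- For θ ≥ 1/4, for every a ∈ [0,1], every b ∈ (a,1], and every q ∈ [0,1], the welfare W(a,b,q) = θ(1−q) − b² + b − 1/3 − (a² − b² − θ(2q−1))²/(4(a−b)) (valid when the indifferent individual lies in [0,1]) satisfies W(a,b,q) ≤ θ − 1/12, the welfare of a single facility of quality 1 at 1/2 serving everyone. -/
set_option maxHeartbeats 1000000 in
private lemma key_quad (a b z : ℝ) (ha0 : 0 ≤ a) (hab : a < b) (hb1 : b ≤ 1)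
    (hz : 0 ≤ z) (hc : 1/4 ≤ (a+b)*(b-a) - 2*z) :
    z^2 ≤ (b-a)*(b-1/2)^2 := by
  have hK : 1/4 ≤ (a+b)*(b-a) := by linarith
  have hquart : ((a+b)*(b-a) - 1/4)^2 ≤ 4*(b-a)*(b-1/2)^2 := by
    nlinarith [sq_nonneg (b-1/2), sq_nonneg a, sq_nonneg (b-1/2-a),
      mul_nonneg ha0 (by linarith : (0:ℝ) ≤ 1-b),
      mul_nonneg ha0 (by linarith : (0:ℝ) ≤ b-a),
      sq_nonneg (a+b-1/2),
      mul_nonneg (by linarith : (0:ℝ) ≤ b-a) (by linarith : (0:ℝ) ≤ 1-b),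
      sq_nonneg (b+a), mul_nonneg ha0 ha0]
  nlinarith [mul_nonneg (by linarith : (0:ℝ) ≤ (a+b)*(b-a) - 1/4 - 2*z)
      (by linarith : (0:ℝ) ≤ (a+b)*(b-a) - 1/4 + 2*z)]

private lemma of_mul_nonneg {d p : ℝ} (hd : 0 < d) (h : 0 ≤ d * p) : 0 ≤ p :=
  le_of_mul_le_mul_left (by linarith : d * 0 ≤ d * p) hd

set_option maxHeartbeats 1000000 in
/-- For θ ≥ 1/4, the two-facility welfare (when the indifferent individual lies
in [0,1]) never exceeds θ − 1/12, the single-facility welfare. -/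
theorem single_facility_dominates (θ : ℝ) (hθ : 1/4 ≤ θ) :
    ∀ a b q : ℝ, a ∈ Set.Icc (0:ℝ) 1 → b ∈ Set.Ioc a 1 → q ∈ Set.Icc (0:ℝ) 1 →
      (a^2 - b^2 - θ*(2*q-1)) / (2*(a-b)) ∈ Set.Icc (0:ℝ) 1 →
      θ*(1-q) - b^2 + b - 1/3 - (a^2 - b^2 - θ*(2*q-1))^2 / (4*(a-b)) ≤ θ - 1/12 := by
  rintro a b q ⟨ha0, ha1⟩ ⟨hab, hb1⟩ ⟨hq0, hq1⟩ ⟨hx0, hx1⟩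
  have hd : a - b < 0 := by linarith
  have hne : a - b ≠ 0 := ne_of_lt hd
  obtain ⟨x, hxdef⟩ : ∃ x : ℝ, x = (a^2 - b^2 - θ*(2*q-1)) / (2*(a-b)) := ⟨_, rfl⟩
  rw [← hxdef] at hx0 hx1
  have hNx : a^2 - b^2 - θ*(2*q-1) = x * (2*(a-b)) := by
    rw [hxdef]; field_simp
  have hterm : (a^2 - b^2 - θ*(2*q-1))^2 / (4*(a-b)) = x^2 * (a-b) := by
    rw [hNx]; field_simp; ring
  rw [hterm]
  clear hxdef hterm hne
  have E : 2*θ*q = θ + 2*x*(b-a) - (a+b)*(b-a) := by linarith only [hNx]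
  clear hNx
  have hdb : (0:ℝ) < b - a := by linarith
  have hqθ : 0 ≤ θ*q := mul_nonneg (by linarith) hq0
  have hxx : 0 ≤ (b-a)*x*(1-x) :=
    mul_nonneg (mul_nonneg hdb.le hx0) (by linarith)
  have main : 0 ≤ θ*q + (b-1/2)^2 - x^2*(b-a) := by
    rcases le_or_gt ((a+b)*(b-a)) θ with h1 | h1
    · -- wide case
      linarith only [hxx, sq_nonneg (b-1/2), E, h1]
    · rcases le_or_gt (2*x*(b-a) - θ*q) (b-a) with h2 | h2
      · -- left-endpoint case, z = x*(b-a) - θ*q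
        have hz0 : 0 ≤ x*(b-a) - θ*q := by linarith only [E, h1]
        have hzc : 1/4 ≤ (a+b)*(b-a) - 2*(x*(b-a) - θ*q) := by linarith only [E, hθ]
        have hk := key_quad a b (x*(b-a) - θ*q) ha0 hab hb1 hz0 hzc
        have hp : 0 ≤ θ*q * ((b-a) - 2*x*(b-a) + θ*q) :=
          mul_nonneg hqθ (by linarith only [h2, hqθ])
        have G : 0 ≤ (b-a)*(θ*q + (b-1/2)^2 - x^2*(b-a)) := by
          linarith only [hk, hp]
        exact of_mul_nonneg hdb G
      · rcases le_or_gt (2*(b-a) - (a+b)*(b-a)) θ with h3 | h3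
        · -- x = 1 endpoint
          linarith only [hxx, sq_nonneg (a-1/2), E, h3]
        · -- right-endpoint case, z2 = (b-a) - x*(b-a) - θ*(1-q)
          have hz20 : 0 ≤ (b-a) - x*(b-a) - θ*(1-q) := by linarith only [E, h3]
          have hzc : 1/4 ≤ ((1-b)+(1-a))*((1-a)-(1-b))
              - 2*((b-a) - x*(b-a) - θ*(1-q)) := by
            have hh : ((1-b)+(1-a))*((1-a)-(1-b))
                - 2*((b-a) - x*(b-a) - θ*(1-q)) = θ := by linarith only [E]
            linarith only [hh, hθ]
          have hk := key_quad (1-b) (1-a) ((b-a) - x*(b-a) - θ*(1-q))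
            (by linarith) (by linarith) (by linarith) hz20 hzc
          have hk' : ((b-a) - x*(b-a) - θ*(1-q))^2 ≤ (b-a)*(1/2-a)^2 := by
            have hh : ((1-a)-(1-b))*((1-a)-1/2)^2 = (b-a)*(1/2-a)^2 := by ring
            linarith only [hk, hh]
          have h1q : 0 ≤ θ*(1-q) := mul_nonneg (by linarith) (by linarith)
          have hp : 0 ≤ θ*(1-q) * (2*x*(b-a) + θ*(1-q) - (b-a)) :=
            mul_nonneg h1q (by linarith only [hqθ, h2, h1q])
          have F1 : (b-a)*θ + (b-a)*(b-1/2)^2 - (x*(b-a) + θ*(1-q))^2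
              = (b-a)*(1/2-a)^2 - ((b-a) - x*(b-a) - θ*(1-q))^2 := by
            linear_combination (b-a) * E
          have G : 0 ≤ (b-a)*(θ*q + (b-1/2)^2 - x^2*(b-a)) := by
            linarith only [hk', hp, F1]
          exact of_mul_nonneg hdb G
  linarith only [main]
end

section
/- Let (a*, b*, q*) with 0 ≤ a* ≤ b* ≤ 1, q* ∈ [0,1] maximize the social welfare W(a,b,q) = ∫₀^{ĵ} (θq − (i−a)²) di + ∫_{ĵ}^1 (θ(1−q) − (i−b)²) di where ĵ = ĵ(a,b,q) is the indifferent individual. If ĵ(a*,b*,q*) ∈ (0,1), then a* > 0, b* < 1, and a* < b*. -/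
open MeasureTheory intervalIntegral

/-- The (clipped) indifferent individual. -/
noncomputable def jhat (θ a b q : ℝ) : ℝ :=
  if a = b then (if 1/2 < q then 1 else 0)
  else min 1 (max 0 ((a^2 - b^2 - θ*(2*q - 1)) / (2*(a - b))))

/-- The social welfare function. -/
noncomputable def Wfull (θ a b q : ℝ) : ℝ :=
  (∫ i in (0:ℝ)..(jhat θ a b q), (θ*q - (i - a)^2)) +
  (∫ i in (jhat θ a b q)..(1:ℝ), (θ*(1-q) - (i - b)^2))

/-- Welfare as an explicit polynomial in the split point `j`. -/
noncomputable def Vval (θ a b q j : ℝ) : ℝ :=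
  (θ*q*(j-0) - ((j-a)^3 - (0-a)^3)/3) + (θ*(1-q)*(1-j) - ((1-b)^3 - (j-b)^3)/3)

lemma integral_eval (c d u v : ℝ) :
    ∫ x in u..v, (c - (x-d)^2) = c*(v-u) - ((v-d)^3 - (u-d)^3)/3 := by
  have h1 : ∫ x in u..v, (x-d)^2 = ((v-d)^3 - (u-d)^3)/3 := by
    rw [intervalIntegral.integral_comp_sub_right (fun x => x^2) d, integral_pow]
    norm_num
  rw [intervalIntegral.integral_sub intervalIntegrable_const (by
    apply Continuous.intervalIntegrable; continuity), h1, intervalIntegral.integral_const]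
  rw [smul_eq_mul]; ring

lemma Wfull_eq (θ a b q : ℝ) : Wfull θ a b q = Vval θ a b q (jhat θ a b q) := by
  unfold Wfull Vval
  rw [integral_eval, integral_eval]

/-- `jhat` maximizes `Vval` over splits in `[0,1]` (when `a < b`). -/
lemma Vval_le (θ a b q j : ℝ) (hab : a < b) (hj0 : 0 ≤ j) (hj1 : j ≤ 1) :
    Vval θ a b q j ≤ Vval θ a b q (jhat θ a b q) := by
  have hne : a ≠ b := ne_of_lt hab
  set s : ℝ := a^2 - b^2 - θ*(2*q - 1) with hs
  set js : ℝ := s / (2*(a-b)) with hjs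
  have hd : a - b < 0 := by linarith
  have hd' : 2*(a-b) ≠ 0 := by intro h; nlinarith
  have hjhat : jhat θ a b q = min 1 (max 0 js) := by
    simp [jhat, hne, hjs, hs]
  rw [hjhat]
  rcases le_or_gt js 0 with h0 | h0
  · -- jhat = 0, and s/(2(a-b)) ≤ 0 with a-b<0 gives s ≥ 0
    have hmax : max 0 js = 0 := max_eq_left h0
    have hmin : min 1 (max 0 js) = 0 := by rw [hmax]; norm_num
    rw [hmin]
    have hseq : s = js * (2*(a-b)) := by rw [hjs]; field_simp
    have hs0 : 0 ≤ s := by nlinarith [mul_nonneg (by linarith : (0:ℝ) ≤ -js) (by linarith : (0:ℝ) ≤ -(2*(a-b)))]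
    have key : Vval θ a b q 0 - Vval θ a b q j = j*(s + (b-a)*j) := by
      unfold Vval; rw [hs]; ring
    nlinarith [mul_nonneg hj0 (by nlinarith : (0:ℝ) ≤ s + (b-a)*j)]
  · rcases le_or_gt 1 js with h1 | h1
    · -- jhat = 1, and js ≥ 1 with a-b<0 gives s ≤ 2(a-b)
      have hmax : max 0 js = js := max_eq_right (le_of_lt h0)
      have hmin : min 1 (max 0 js) = 1 := by rw [hmax]; exact min_eq_left h1
      rw [hmin]
      have hseq : s = js * (2*(a-b)) := by rw [hjs]; field_simp
      have hs1 : s ≤ 2*(a-b) := by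
        nlinarith [mul_nonneg (by linarith : (0:ℝ) ≤ js - 1) (by linarith : (0:ℝ) ≤ -(2*(a-b)))]
      have key : Vval θ a b q 1 - Vval θ a b q j = (1-j)*(-s - (b-a)*(1+j)) := by
        unfold Vval; rw [hs]; ring
      nlinarith [mul_nonneg (by linarith : (0:ℝ) ≤ 1-j) (by nlinarith : (0:ℝ) ≤ -s - (b-a)*(1+j))]
    · -- interior: jhat = js
      have hmax : max 0 js = js := max_eq_right (le_of_lt h0)
      have hmin : min 1 (max 0 js) = js := by rw [hmax]; exact min_eq_right (le_of_lt h1)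
      rw [hmin]
      have key : Vval θ a b q js - Vval θ a b q j = (b-a)*(js - j)^2 := by
        unfold Vval
        rw [hjs, hs]
        field_simp
        ring
      nlinarith [mul_nonneg (by linarith : (0:ℝ) ≤ b-a) (sq_nonneg (js - j))]

/-- At a social optimum with interior indifferent individual, the binding
constraints a ≥ 0, b ≤ 1, a ≤ b are all slack: a* > 0, b* < 1, a* < b*. -/
theorem interior_optimum_slack_constraints
    (θ a' b' q' : ℝ) (hθ : 0 < θ)
    (ha : 0 ≤ a') (hab : a' ≤ b') (hb : b' ≤ 1) (hq : q' ∈ Set.Icc (0:ℝ) 1)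
    (hopt : ∀ a b q : ℝ, 0 ≤ a → a ≤ b → b ≤ 1 → q ∈ Set.Icc (0:ℝ) 1 →
      Wfull θ a b q ≤ Wfull θ a' b' q')
    (hj : jhat θ a' b' q' ∈ Set.Ioo (0:ℝ) 1) :
    0 < a' ∧ b' < 1 ∧ a' < b' := by
  obtain ⟨hj0, hj1⟩ := hj
  -- first: a' < b'
  have habs : a' < b' := by
    rcases lt_or_eq_of_le hab with h | h
    · exact h
    · exfalso
      have : jhat θ a' b' q' = if 1/2 < q' then 1 else 0 := by simp [jhat, h]
      by_cases hq2 : 1/2 < q'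
      · rw [this, if_pos hq2] at hj1; linarith
      · rw [this, if_neg hq2] at hj0; linarith
  set j' : ℝ := jhat θ a' b' q' with hj'
  constructor
  · -- 0 < a'
    by_contra hca
    have ha0 : a' = 0 := le_antisymm (not_lt.mp hca) ha
    have hb0 : 0 < b' := by linarith
    set a : ℝ := min (j'/2) (b'/2) with hadef
    have hapos : 0 < a := lt_min (by linarith) (by linarith)
    have haj : a < j' := lt_of_le_of_lt (min_le_left _ _) (by linarith)
    have hab2 : a < b' := lt_of_le_of_lt (min_le_right _ _) (by linarith)
    have h1 : Vval θ a b' q' j' ≤ Wfull θ a b' q' := by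
      rw [Wfull_eq]
      exact Vval_le θ a b' q' j' hab2 (le_of_lt hj0) (le_of_lt hj1)
    have h2 : Vval θ a b' q' j' - Vval θ 0 b' q' j' = a*j'*(j'-a) := by
      unfold Vval; ring
    have h3 : Wfull θ 0 b' q' = Vval θ 0 b' q' j' := by
      rw [Wfull_eq]; rw [hj', ha0]
    have h4 := hopt a b' q' (le_of_lt hapos) (le_of_lt hab2) hb hq
    rw [ha0] at h4
    nlinarith [mul_pos (mul_pos hapos hj0) (by linarith : (0:ℝ) < j' - a)]
  refine ⟨?_, habs⟩
  -- b' < 1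
  by_contra hcb
  have hb1 : b' = 1 := le_antisymm hb (not_lt.mp hcb)
  have ha1 : a' < 1 := by linarith
  set b : ℝ := max ((1+j')/2) ((1+a')/2) with hbdef
  have hblt1 : b < 1 := max_lt (by linarith) (by linarith)
  have hjb : j' < b := lt_of_lt_of_le (by linarith) (le_max_left _ _)
  have hab2 : a' < b := lt_of_lt_of_le (by linarith) (le_max_right _ _)
  have h1 : Vval θ a' b q' j' ≤ Wfull θ a' b q' := by
    rw [Wfull_eq]
    exact Vval_le θ a' b q' j' hab2 (le_of_lt hj0) (le_of_lt hj1)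
  have h2 : Vval θ a' b q' j' - Vval θ a' 1 q' j' = (1-b)*(1-j')*(b-j') := by
    unfold Vval; ring
  have h3 : Wfull θ a' 1 q' = Vval θ a' 1 q' j' := by
    rw [Wfull_eq]; rw [hj', hb1]
  have h4 := hopt a' b q' ha (le_of_lt hab2) (le_of_lt hblt1) hq
  rw [hb1] at h4
  nlinarith [mul_pos (mul_pos (by linarith : (0:ℝ) < 1-b) (by linarith : (0:ℝ) < 1-j'))
    (by linarith : (0:ℝ) < b-j')]
end

section
/- For θ ∈ (0, 1/4), the maximum of W(a, b, 0) = θ − b² + b − 1/3 − (a² − b² + θ)²/(4(a−b)) over 0 ≤ a < b ≤ 1 (with indifferent individual in [0,1]) is attained at (a,b) = (1/4 − θ, 3/4 − θ). -/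
set_option maxHeartbeats 800000 in
/-- For θ ∈ (0,1/4), W(a,b,0) = θ − b² + b − 1/3 − (a²−b²+θ)²/(4(a−b)) over
0 ≤ a < b ≤ 1 (with indifferent individual in [0,1]) attains its maximum at
(a,b) = (1/4−θ, 3/4−θ). -/
theorem optimum_at_quality_zero (θ : ℝ) (hθ : θ ∈ Set.Ioo (0:ℝ) (1/4)) :
    ∀ a b : ℝ, 0 ≤ a → a < b → b ≤ 1 →
      (a^2 - b^2 + θ) / (2*(a - b)) ∈ Set.Icc (0:ℝ) 1 →
      θ - b^2 + b - 1/3 - (a^2 - b^2 + θ)^2 / (4*(a-b)) ≤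
      θ - (3/4 - θ)^2 + (3/4 - θ) - 1/3 -
        ((1/4 - θ)^2 - (3/4 - θ)^2 + θ)^2 / (4*((1/4 - θ) - (3/4 - θ))) := by
  obtain ⟨hθ0, hθ4⟩ := hθ
  intro a b ha hab hb hx
  have hd : 0 < b - a := by linarith
  -- The RHS simplifies to a closed form
  have hR : θ - (3/4 - θ)^2 + (3/4 - θ) - 1/3 -
      ((1/4 - θ)^2 - (3/4 - θ)^2 + θ)^2 / (4*((1/4 - θ) - (3/4 - θ)))
      = θ^2 + θ/2 - 1/48 := by
    have h2 : (4*((1/4 - θ) - (3/4 - θ))) = (-2 : ℝ) := by ring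
    rw [h2]
    ring
  rw [hR]
  -- From x ≥ 0 and 2(a-b) < 0 we get a² - b² + θ ≤ 0
  have hE : a^2 - b^2 + θ ≤ 0 := by
    have hx0 := hx.1
    have hden : 2*(a-b) < 0 := by linarith
    have hne : (2*(a-b)) ≠ 0 := by linarith
    have heq : a^2 - b^2 + θ = ((a^2 - b^2 + θ) / (2*(a - b))) * (2*(a-b)) :=
      (div_mul_cancel₀ _ hne).symm
    rw [heq]
    exact mul_nonpos_of_nonneg_of_nonpos hx0 hden.le
  -- r := (b-a)(a+b) - θ ≥ 0
  have hr : 0 ≤ (b-a)*(a+b) - θ := by nlinarith [hE]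
  -- key polynomial inequality
  have hG : (a^2 - b^2 + θ)^2 ≤ 4*(b-a) * (θ^2 - θ/2 + b^2 - b + 5/16) := by
    have hu1 : b - a ≤ 1 := by linarith
    rcases le_or_gt θ ((b-a)*(1-(b-a))) with hcase | hcase
    · -- interior case: m ≥ θ
      have hm4 : 0 ≤ (b-a)*(1-(b-a)) - 4*θ^2 := by nlinarith
      have hu : b - a < 1 := by nlinarith
      have key : (1-(b-a)) * (4*(b-a)*(θ^2-θ/2+b^2-b+5/16) - (a^2-b^2+θ)^2)
          = (b-a)*((1-(b-a))*(2*b-1) - ((b-a)*(1-(b-a)) - θ))^2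
            + (1/2-(b-a))^2 * ((b-a)*(1-(b-a)) - 4*θ^2) := by ring
      have hN : 0 ≤ (1-(b-a)) * (4*(b-a)*(θ^2-θ/2+b^2-b+5/16) - (a^2-b^2+θ)^2) := by
        rw [key]
        exact add_nonneg (mul_nonneg hd.le (sq_nonneg _))
          (mul_nonneg (sq_nonneg _) hm4)
      have hupos : (0:ℝ) < 1-(b-a) := by linarith
      have hD : 0 ≤ 4*(b-a)*(θ^2-θ/2+b^2-b+5/16) - (a^2-b^2+θ)^2 :=
        (mul_nonneg_iff_of_pos_left hupos).mp hN
      linarith [hD]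
    · -- boundary case: m < θ
      have huQ : 0 < (b-a)*(2*b-1) := by linarith [hr, hcase]
      have hQ : 0 < 2*b - 1 := by
        by_contra h
        push_neg at h
        nlinarith [mul_nonpos_of_nonneg_of_nonpos hd.le h]
      have hle : (b-a)*(a+b) - θ ≤ (b-a)*(2*b-1) := by nlinarith
      have hr2 : ((b-a)*(a+b) - θ)^2 ≤ ((b-a)*(2*b-1))^2 :=
        mul_self_le_mul_self hr hle |>.trans_eq (by ring) |>.trans_eq' (by ring)
      nlinarith [hr2,
        mul_nonneg (mul_nonneg hd.le (by linarith : (0:ℝ) ≤ 1-(b-a)))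
          (sq_nonneg (2*b-1)),
        mul_nonneg hd.le (sq_nonneg (1/2-2*θ))]
  -- conclude
  have h4 : (0:ℝ) < 4*(b-a) := by linarith
  have hdiv : (a^2 - b^2 + θ)^2 / (4*(b-a)) ≤ θ^2 - θ/2 + b^2 - b + 5/16 :=
    (div_le_iff₀ h4).mpr (by linarith [hG])
  have hEq : (a^2 - b^2 + θ)^2 / (4*(a-b)) = -((a^2 - b^2 + θ)^2 / (4*(b-a))) := by
    rw [show (4*(a-b)) = -(4*(b-a)) by ring, div_neg]
  rw [hEq]
  linarith [hdiv]
end
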